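/- arXiv:2307.00487 — 12 statements merged into one kernel-verified Lean document; each statement's English description precedes it below -/
import Mathlib

section
/- Every almost Hurewicz space is θ-Hurewicz. -/
open Filter Topology Set

def AlphaOpen {X : Type*} [TopologicalSpace X] (A : Set X) : Prop :=
  A ⊆ interior (closure (interior A))

def ThetaOpen {X : Type*} [TopologicalSpace X] (A : Set X) : Prop :=
  ∀ x ∈ A, ∃ B : Set X, IsOpen B ∧ x ∈ B ∧ closure B ⊆ A

def SemiOpen {X : Type*} [TopologicalSpace X] (A : Set X) : Prop :=
  A ⊆ closure (interior A)

/-- Generic Hurewicz-type selection principle for covers by sets satisfying `P`. -/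
def HurewiczFor (X : Type*) [TopologicalSpace X] (P : Set X → Prop) : Prop :=
  ∀ 𝒜 : ℕ → Set (Set X),
    (∀ k, (∀ U ∈ 𝒜 k, P U) ∧ ⋃₀ 𝒜 k = Set.univ) →
    ∃ ℬ : ℕ → Set (Set X),
      (∀ k, ℬ k ⊆ 𝒜 k ∧ (ℬ k).Finite) ∧
      ∀ x : X, ∀ᶠ k in Filter.atTop, x ∈ ⋃₀ ℬ k

def Hurewicz (X : Type*) [TopologicalSpace X] : Prop := HurewiczFor X IsOpen
def AlphaHurewicz (X : Type*) [TopologicalSpace X] : Prop := HurewiczFor X AlphaOpen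
def ThetaHurewicz (X : Type*) [TopologicalSpace X] : Prop := HurewiczFor X ThetaOpen
def MildlyHurewicz (X : Type*) [TopologicalSpace X] : Prop := HurewiczFor X IsClopen
def SemiHurewicz (X : Type*) [TopologicalSpace X] : Prop := HurewiczFor X SemiOpen

def AlmostHurewicz (X : Type*) [TopologicalSpace X] : Prop :=
  ∀ 𝒜 : ℕ → Set (Set X),
    (∀ k, (∀ U ∈ 𝒜 k, IsOpen U) ∧ ⋃₀ 𝒜 k = Set.univ) →
    ∃ ℬ : ℕ → Set (Set X),
      (∀ k, ℬ k ⊆ 𝒜 k ∧ (ℬ k).Finite) ∧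
      ∀ x : X, ∀ᶠ k in Filter.atTop, ∃ B ∈ ℬ k, x ∈ closure B

theorem almostHurewicz_thetaHurewicz (X : Type*) [TopologicalSpace X]
    (h : AlmostHurewicz X) : ThetaHurewicz X := by
  intro 𝒜 h𝒜
  set 𝒞 : ℕ → Set (Set X) := fun k =>
    {B | IsOpen B ∧ ∃ A ∈ 𝒜 k, closure B ⊆ A} with h𝒞
  obtain ⟨ℬ', hℬ'⟩ := h 𝒞 (by
    intro k
    constructor
    · intro U hU; exact hU.1
    · apply Set.eq_univ_of_forall
      intro x
      have hx : x ∈ ⋃₀ 𝒜 k := by rw [(h𝒜 k).2]; trivial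
      obtain ⟨A, hA, hxA⟩ := hx
      obtain ⟨B, hB, hxB, hBA⟩ := (h𝒜 k).1 A hA x hxA
      exact ⟨B, ⟨hB, A, hA, hBA⟩, hxB⟩)
  classical
  choose f hf1 hf2 using fun k (B : Set X) (hB : B ∈ 𝒞 k) => hB.2
  refine ⟨fun k => (fun B => if hB : B ∈ 𝒞 k then f k B hB else ∅) '' (ℬ' k), ?_, ?_⟩
  · intro k
    constructor
    · rintro A ⟨B, hB, rfl⟩
      have hB𝒞 : B ∈ 𝒞 k := (hℬ'.1 k).1 hB
      simp only [dif_pos hB𝒞]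
      exact hf1 k B hB𝒞
    · exact ((hℬ'.1 k).2).image _
  · intro x
    filter_upwards [hℬ'.2 x] with k hk
    obtain ⟨B, hB, hxB⟩ := hk
    have hB𝒞 : B ∈ 𝒞 k := (hℬ'.1 k).1 hB
    refine ⟨f k B hB𝒞, ⟨B, hB, by simp [dif_pos hB𝒞]⟩, hf2 k B hB𝒞 hxB⟩
end

section
/- In an extremally disconnected topological space, every mildly Hurewicz semi-regular space is semi-Hurewicz. (In particular, for extremally disconnected semi-regular spaces the properties semi-Hurewicz, α-Hurewicz, Hurewicz, nearly Hurewicz, almost Hurewicz, θ-Hurewicz, and mildly Hurewicz are all equivalent.) -/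
open Filter Topology Set

def SemiClosed {X : Type*} [TopologicalSpace X] (A : Set X) : Prop := SemiOpen Aᶜ

def sCl {X : Type*} [TopologicalSpace X] (A : Set X) : Set X :=
  ⋂₀ {C : Set X | SemiClosed C ∧ A ⊆ C}

def SemiRegularSpace (X : Type*) [TopologicalSpace X] : Prop :=
  ∀ (x : X) (A : Set X), SemiOpen A → x ∈ A →
    ∃ B : Set X, SemiOpen B ∧ x ∈ B ∧ sCl B ⊆ A

theorem mildlyHurewicz_semiHurewicz_of_extremallyDisconnected_semiRegular
    (X : Type*) [TopologicalSpace X] [ExtremallyDisconnected X]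
    (hreg : SemiRegularSpace X) (h : MildlyHurewicz X) : SemiHurewicz X := by
  intro 𝒜 h𝒜
  set 𝒞 : ℕ → Set (Set X) := fun k => {C | IsClopen C ∧ ∃ A ∈ 𝒜 k, C ⊆ A} with h𝒞def
  have hcov : ∀ k, (∀ U ∈ 𝒞 k, IsClopen U) ∧ ⋃₀ 𝒞 k = Set.univ := by
    intro k
    refine ⟨fun U hU => hU.1, Set.eq_univ_of_forall fun x => ?_⟩
    have hx : x ∈ ⋃₀ 𝒜 k := (h𝒜 k).2 ▸ Set.mem_univ x
    obtain ⟨A, hA, hxA⟩ := hx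
    obtain ⟨B, hB, hxB, hsCl⟩ := hreg x A ((h𝒜 k).1 A hA) hxA
    have hopen : IsOpen (closure (interior B)) :=
      ExtremallyDisconnected.open_closure _ isOpen_interior
    refine ⟨closure (interior B), ⟨⟨isClosed_closure, hopen⟩, A, hA, ?_⟩, hB hxB⟩
    refine subset_trans ?_ hsCl
    intro y hy
    rw [sCl, Set.mem_sInter]
    rintro D ⟨hDsc, hBD⟩
    have h1 : interior (closure D) ⊆ D := by
      rw [SemiClosed, SemiOpen, interior_compl, closure_compl] at hDsc
      exact Set.compl_subset_compl.mp hDsc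
    have h2 : closure (interior B) ⊆ closure D :=
      closure_mono ((interior_mono hBD).trans interior_subset)
    exact h1 (interior_maximal h2 hopen hy)
  obtain ⟨ℬ', hℬ'1, hℬ'2⟩ := h 𝒞 hcov
  have hch : ∀ k, ∀ C ∈ 𝒞 k, ∃ A ∈ 𝒜 k, C ⊆ A := fun k C hC => hC.2
  choose! f hf1 hf2 using hch
  refine ⟨fun k => (f k) '' ℬ' k, fun k => ⟨?_, ((hℬ'1 k).2).image _⟩, ?_⟩
  · rintro _ ⟨C, hC, rfl⟩; exact hf1 k C ((hℬ'1 k).1 hC)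
  · intro x
    filter_upwards [hℬ'2 x] with k hk
    obtain ⟨C, hC, hxC⟩ := hk
    exact ⟨f k C, ⟨C, hC, rfl⟩, hf2 k C ((hℬ'1 k).1 hC) hxC⟩
end

section
/- A clopen subspace of an α-Hurewicz space is α-Hurewicz. -/
open Filter Topology Set

lemma interior_image_val {X : Type*} [TopologicalSpace X] {Y : Set X} (hY : IsOpen Y)
    (U : Set Y) : interior (Subtype.val '' U) = Subtype.val '' interior U := by
  apply subset_antisymm
  · have h1 : interior (Subtype.val '' U) ⊆ Subtype.val '' (univ : Set Y) := by
      simp only [image_univ, Subtype.range_coe]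
      exact interior_subset.trans (by rintro x ⟨y, _, rfl⟩; exact y.2)
    intro x hx
    obtain ⟨y, -, rfl⟩ := h1 hx
    refine ⟨y, ?_, rfl⟩
    have : (Subtype.val ⁻¹' interior (Subtype.val '' U) : Set Y) ⊆ interior U :=
      interior_maximal (fun z hz => by
        obtain ⟨w, hw, hwz⟩ := interior_subset hz
        rwa [Subtype.val_injective hwz] at hw)
        (isOpen_interior.preimage continuous_subtype_val)
    exact this hx
  · exact hY.isOpenMap_subtype_val.image_interior_subset U

lemma alphaOpen_image_val {X : Type*} [TopologicalSpace X] {Y : Set X} (hY : IsClopen Y)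
    {U : Set Y} (hU : AlphaOpen U) : AlphaOpen (Subtype.val '' U) := by
  intro x hx
  have hcl : closure (interior (Subtype.val '' U)) =
      Subtype.val '' closure (interior U) := by
    rw [interior_image_val hY.isOpen, hY.isClosed.isClosedEmbedding_subtypeVal.closure_image_eq]
  rw [hcl, interior_image_val hY.isOpen]
  obtain ⟨y, hy, rfl⟩ := hx
  exact ⟨y, hU hy, rfl⟩

theorem clopen_subspace_alphaHurewicz (X : Type*) [TopologicalSpace X]
    (Y : Set X) (hY : IsClopen Y) (h : AlphaHurewicz X) : AlphaHurewicz Y := by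
  intro 𝒜 h𝒜
  set f : Set Y → Set X := fun U => Subtype.val '' U with hf
  have hfinj : Function.Injective f := Set.image_injective.mpr Subtype.val_injective
  set 𝒜' : ℕ → Set (Set X) := fun k => insert Yᶜ (f '' 𝒜 k) with h𝒜'
  obtain ⟨ℬ', hℬ'₁, hℬ'₂⟩ := h 𝒜' (fun k => by
    constructor
    · rintro U (rfl | ⟨V, hV, rfl⟩)
      · have ho : IsOpen Yᶜ := hY.isClosed.isOpen_compl
        calc Yᶜ = interior Yᶜ := ho.interior_eq.symm
        _ ⊆ interior (closure (interior Yᶜ)) :=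
          interior_mono (subset_closure.trans (closure_mono ho.interior_eq.symm.subset))
      · exact alphaOpen_image_val hY ((h𝒜 k).1 V hV)
    · ext x
      simp only [Set.mem_sUnion, Set.mem_univ, iff_true]
      by_cases hx : x ∈ Y
      · have : (⟨x, hx⟩ : Y) ∈ ⋃₀ 𝒜 k := by rw [(h𝒜 k).2]; trivial
        obtain ⟨U, hU, hxU⟩ := this
        exact ⟨f U, Or.inr ⟨U, hU, rfl⟩, ⟨⟨x, hx⟩, hxU, rfl⟩⟩
      · exact ⟨Yᶜ, Or.inl rfl, hx⟩)
  refine ⟨fun k => {U ∈ 𝒜 k | f U ∈ ℬ' k}, fun k => ⟨fun U hU => hU.1, ?_⟩, ?_⟩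
  · exact ((hℬ'₁ k).2.preimage hfinj.injOn).subset fun U hU => hU.2
  · intro x
    filter_upwards [hℬ'₂ x.val] with k hk
    obtain ⟨V, hV, hxV⟩ := hk
    rcases (hℬ'₁ k).1 hV with rfl | ⟨U, hU, rfl⟩
    · exact absurd x.2 hxV
    · obtain ⟨y, hy, hyx⟩ := hxV
      exact ⟨U, ⟨hU, hV⟩, by rwa [Subtype.val_injective hyx] at hy⟩
end

section
/- A clopen subspace of a θ-Hurewicz space is θ-Hurewicz. -/
open Filter Topology Set

theorem clopen_subspace_thetaHurewicz (X : Type*) [TopologicalSpace X]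
    (Y : Set X) (hY : IsClopen Y) (h : ThetaHurewicz X) : ThetaHurewicz Y := by
  intro 𝒜 h𝒜
  set f : Set Y → Set X := fun U => (Subtype.val '' U) ∪ Yᶜ with hf
  have hce : IsClosedEmbedding (Subtype.val : Y → X) := hY.1.isClosedEmbedding_subtypeVal
  -- θ-openness of f U
  have hfθ : ∀ k, ∀ U ∈ 𝒜 k, ThetaOpen (f U) := by
    intro k U hU x hx
    rcases hx with hx | hx
    · rcases hx with ⟨y, hyU, rfl⟩
      rcases (h𝒜 k).1 U hU y hyU with ⟨B, hBopen, hyB, hBcl⟩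
      refine ⟨Subtype.val '' B, hY.2.isOpenMap_subtype_val B hBopen, ⟨y, hyB, rfl⟩, ?_⟩
      rw [hce.closure_image_eq]
      exact (Set.image_mono hBcl).trans (Set.subset_union_left)
    · exact ⟨Yᶜ, hY.1.isOpen_compl, hx, by
        rw [(hY.2.isClosed_compl).closure_eq]; exact Set.subset_union_right⟩
  have hθc : ThetaOpen Yᶜ := fun x hx => ⟨Yᶜ, hY.1.isOpen_compl, hx, by
    rw [(hY.2.isClosed_compl).closure_eq]⟩
  obtain ⟨ℬ', hℬ'⟩ := h (fun k => (f '' 𝒜 k) ∪ {Yᶜ}) (by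
    intro k
    constructor
    · rintro V (⟨U, hU, rfl⟩ | rfl)
      · exact hfθ k U hU
      · exact hθc
    · apply Set.eq_univ_of_forall
      intro x
      by_cases hx : x ∈ Y
      · have : (⟨x, hx⟩ : Y) ∈ ⋃₀ 𝒜 k := by rw [(h𝒜 k).2]; trivial
        rcases this with ⟨U, hU, hxU⟩
        exact ⟨f U, Or.inl ⟨U, hU, rfl⟩, Or.inl ⟨⟨x, hx⟩, hxU, rfl⟩⟩
      · exact ⟨Yᶜ, Or.inr rfl, hx⟩)
  refine ⟨fun k => (fun V => (Subtype.val : Y → X) ⁻¹' V) '' (ℬ' k \ {Yᶜ}), ?_, ?_⟩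
  · intro k
    constructor
    · rintro U ⟨V, ⟨hV, hVne⟩, rfl⟩
      rcases (hℬ'.1 k).1 hV with ⟨U', hU', rfl⟩ | h'
      · have : (Subtype.val : Y → X) ⁻¹' (f U') = U' := by
          ext y
          simp [hf, Subtype.val_injective.mem_set_image, y.2]
        simpa only [this] using hU'
      · exact absurd h' hVne
    · exact (((hℬ'.1 k).2.diff).image _)
  · intro y
    filter_upwards [hℬ'.2 (y : X)] with k hk
    rcases hk with ⟨V, hV, hyV⟩
    have hVne : V ≠ Yᶜ := by
      intro rfl'
      exact (rfl' ▸ hyV) y.2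
    exact ⟨_, ⟨V, ⟨hV, hVne⟩, rfl⟩, hyV⟩
end

section
/- If f : X → Y is a surjective α-continuous map and X is α-Hurewicz, then Y is Hurewicz. -/
open Filter Topology Set

theorem alphaContinuous_image_hurewicz {X Y : Type*} [TopologicalSpace X]
    [TopologicalSpace Y] (f : X → Y) (hf : Function.Surjective f)
    (hc : ∀ V : Set Y, IsOpen V → AlphaOpen (f ⁻¹' V))
    (h : AlphaHurewicz X) : Hurewicz Y := by
  intro 𝒜 h𝒜
  obtain ⟨ℬ', hℬ'sub, hℬ'cov⟩ := h (fun k => (f ⁻¹' ·) '' 𝒜 k) (fun k => by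
    constructor
    · rintro U ⟨V, hV, rfl⟩
      exact hc V ((h𝒜 k).1 V hV)
    · apply eq_univ_of_forall
      intro x
      have : f x ∈ ⋃₀ 𝒜 k := (h𝒜 k).2 ▸ mem_univ _
      obtain ⟨V, hV, hfx⟩ := this
      exact ⟨f ⁻¹' V, ⟨V, hV, rfl⟩, hfx⟩)
  refine ⟨fun k => {V ∈ 𝒜 k | f ⁻¹' V ∈ ℬ' k}, fun k => ?_, ?_⟩
  · refine ⟨fun V hV => hV.1, ?_⟩
    have hinj : Function.Injective (fun V : Set Y => f ⁻¹' V) :=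
      fun a b hab => hf.preimage_injective hab
    apply Set.Finite.of_finite_image (f := fun V : Set Y => f ⁻¹' V)
    · exact ((hℬ'sub k).2.subset (by rintro _ ⟨V, hV, rfl⟩; exact hV.2))
    · exact hinj.injOn
  · intro y
    obtain ⟨x, rfl⟩ := hf y
    filter_upwards [hℬ'cov x] with k hk
    obtain ⟨B, hB, hxB⟩ := hk
    obtain ⟨V, hV, rfl⟩ := (hℬ'sub k).1 hB
    exact ⟨V, ⟨hV, hB⟩, hxB⟩
end

section
/- If f : X → Y is a surjective α-irresolute map and X is α-Hurewicz, then Y is α-Hurewicz. -/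
open Filter Topology Set

theorem alphaIrresolute_image_alphaHurewicz {X Y : Type*} [TopologicalSpace X]
    [TopologicalSpace Y] (f : X → Y) (hf : Function.Surjective f)
    (hc : ∀ V : Set Y, AlphaOpen V → AlphaOpen (f ⁻¹' V))
    (h : AlphaHurewicz X) : AlphaHurewicz Y := by
  intro 𝒜 h𝒜
  obtain ⟨ℬ, hℬ, hcov⟩ := h (fun k => (fun V => f ⁻¹' V) '' 𝒜 k) (by
    intro k
    constructor
    · rintro U ⟨V, hV, rfl⟩
      exact hc V ((h𝒜 k).1 V hV)
    · apply Set.eq_univ_of_forall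
      intro x
      have : f x ∈ ⋃₀ 𝒜 k := ((h𝒜 k).2).symm ▸ Set.mem_univ _
      obtain ⟨V, hV, hxV⟩ := this
      exact ⟨f ⁻¹' V, ⟨V, hV, rfl⟩, hxV⟩)
  choose g hg1 hg2 using fun k (B : Set X) (hB : B ∈ ℬ k) =>
    (hℬ k).1 hB
  refine ⟨fun k => {V | ∃ B, ∃ hB : B ∈ ℬ k, V = g k B hB}, ?_, ?_⟩
  · intro k
    constructor
    · rintro V ⟨B, hB, rfl⟩
      exact hg1 k B hB
    · have : {V | ∃ B, ∃ hB : B ∈ ℬ k, V = g k B hB} ⊆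
          (fun p : {B // B ∈ ℬ k} => g k p.1 p.2) '' Set.univ := by
        rintro V ⟨B, hB, rfl⟩
        exact ⟨⟨B, hB⟩, Set.mem_univ _, rfl⟩
      have : Finite {B // B ∈ ℬ k} := (hℬ k).2.to_subtype
      exact Set.Finite.subset (Set.finite_univ.image _) ‹_›
  · intro y
    obtain ⟨x, rfl⟩ := hf y
    filter_upwards [hcov x] with k hk
    obtain ⟨B, hB, hxB⟩ := hk
    refine ⟨g k B hB, ⟨B, hB, rfl⟩, ?_⟩
    have := hg2 k B hB
    rw [← this] at hxB
    exact hxB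
end

section
/- If f : X → Y is a surjective strongly θ-continuous map and X is θ-Hurewicz, then Y is Hurewicz. -/
open Filter Topology Set

theorem stronglyThetaContinuous_image_hurewicz {X Y : Type*} [TopologicalSpace X]
    [TopologicalSpace Y] (f : X → Y) (hf : Function.Surjective f)
    (hc : ∀ (x : X) (B : Set Y), IsOpen B → f x ∈ B →
      ∃ A : Set X, IsOpen A ∧ x ∈ A ∧ f '' closure A ⊆ B)
    (h : ThetaHurewicz X) : Hurewicz Y := by
  intro 𝒜 h𝒜
  -- preimage covers
  obtain ⟨ℬ', hℬ'sub, hℬ'cov⟩ := h (fun k => (fun B => f ⁻¹' B) '' 𝒜 k) (by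
    intro k
    constructor
    · rintro U ⟨B, hB, rfl⟩ x hx
      obtain ⟨A, hA, hxA, hAB⟩ := hc x B ((h𝒜 k).1 B hB) hx
      exact ⟨A, hA, hxA, fun z hz => hAB ⟨z, hz, rfl⟩⟩
    · apply Set.eq_univ_of_forall
      intro x
      have : f x ∈ ⋃₀ 𝒜 k := (h𝒜 k).2 ▸ Set.mem_univ _
      obtain ⟨B, hB, hxB⟩ := this
      exact ⟨f ⁻¹' B, ⟨B, hB, rfl⟩, hxB⟩)
  choose g hg1 hg2 using fun k (U : Set X) (hU : U ∈ ℬ' k) =>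
    (hℬ'sub k).1 hU
  refine ⟨fun k => {B | ∃ U, ∃ hU : U ∈ ℬ' k, g k U hU = B}, ?_, ?_⟩
  · intro k
    constructor
    · rintro B ⟨U, hU, rfl⟩
      exact hg1 k U hU
    · have : {B | ∃ U, ∃ hU : U ∈ ℬ' k, g k U hU = B} ⊆
          (fun U : (ℬ' k) => g k U.1 U.2) '' Set.univ := by
        rintro B ⟨U, hU, rfl⟩
        exact ⟨⟨U, hU⟩, trivial, rfl⟩
      have hfin : Finite (ℬ' k) := (hℬ'sub k).2.to_subtype
      exact Set.Finite.subset (Set.finite_univ.image _) this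
  · intro y
    obtain ⟨x, rfl⟩ := hf y
    filter_upwards [hℬ'cov x] with k hk
    obtain ⟨U, hU, hxU⟩ := hk
    refine ⟨g k U hU, ⟨U, hU, rfl⟩, ?_⟩
    have := hg2 k U hU
    rw [← this] at hxU
    exact hxU
end

section
/- If f : X → Y is a surjective θ-continuous map and X is θ-Hurewicz, then Y is θ-Hurewicz. -/
open Filter Topology Set

theorem thetaContinuous_image_thetaHurewicz {X Y : Type*} [TopologicalSpace X]
    [TopologicalSpace Y] (f : X → Y) (hf : Function.Surjective f)
    (hc : ∀ (x : X) (B : Set Y), IsOpen B → f x ∈ B →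
      ∃ A : Set X, IsOpen A ∧ x ∈ A ∧ f '' closure A ⊆ closure B)
    (h : ThetaHurewicz X) : ThetaHurewicz Y := by
  intro 𝒜 h𝒜
  -- preimage covers
  have key : ∀ k, (∀ V ∈ (fun U => f ⁻¹' U) '' 𝒜 k, ThetaOpen V) ∧
      ⋃₀ ((fun U => f ⁻¹' U) '' 𝒜 k) = Set.univ := by
    intro k
    constructor
    · rintro V ⟨U, hU, rfl⟩ x hx
      obtain ⟨B, hBo, hxB, hBU⟩ := (h𝒜 k).1 U hU (f x) hx
      obtain ⟨A, hAo, hxA, hAB⟩ := hc x B hBo hxB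
      exact ⟨A, hAo, hxA, fun z hz => hBU (hAB ⟨z, hz, rfl⟩)⟩
    · ext x
      simp only [Set.mem_sUnion, Set.mem_univ, iff_true]
      have : f x ∈ ⋃₀ 𝒜 k := by rw [(h𝒜 k).2]; trivial
      obtain ⟨U, hU, hxU⟩ := this
      exact ⟨f ⁻¹' U, ⟨U, hU, rfl⟩, hxU⟩
  obtain ⟨ℬ', hℬ'1, hℬ'2⟩ := h _ key
  -- choose originals
  have hch : ∀ k, ∀ V ∈ ℬ' k, ∃ U ∈ 𝒜 k, f ⁻¹' U = V := by
    intro k V hV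
    obtain ⟨U, hU, hUV⟩ := (hℬ'1 k).1 hV
    exact ⟨U, hU, hUV⟩
  choose g hg1 hg2 using hch
  refine ⟨fun k => (fun V : ↥(ℬ' k) => g k V.1 V.2) '' Set.univ, fun k => ?_, fun y => ?_⟩
  · constructor
    · rintro U ⟨⟨V, hV⟩, -, rfl⟩; exact hg1 k V hV
    · exact (Set.finite_univ_iff.mpr ((hℬ'1 k).2.to_subtype)).image _
  · obtain ⟨x, rfl⟩ := hf y
    filter_upwards [hℬ'2 x] with k hk
    obtain ⟨V, hV, hxV⟩ := hk
    refine ⟨g k V hV, ⟨⟨V, hV⟩, trivial, rfl⟩, ?_⟩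
    rw [← hg2 k V hV] at hxV
    exact hxV
end

section
/- A space (X, τ) is α-Hurewicz if and only if there exists a strongly α-open bijection from (X, τ) onto some Hurewicz space (Y, τ'). -/
open Filter Topology Set

lemma alphaOpen_inter {X : Type*} [TopologicalSpace X] {A B : Set X}
    (hA : AlphaOpen A) (hB : AlphaOpen B) : AlphaOpen (A ∩ B) := by
  have key : interior (closure (interior A)) ∩ interior (closure (interior B)) ⊆
      interior (closure (interior (A ∩ B))) := by
    apply interior_maximal _ (isOpen_interior.inter isOpen_interior)
    calc interior (closure (interior A)) ∩ interior (closure (interior B))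
        ⊆ interior (closure (interior B)) ∩ closure (interior A) := by
          refine Set.subset_inter (Set.inter_subset_right) ?_
          exact Set.inter_subset_left.trans interior_subset
      _ ⊆ closure (interior (closure (interior B)) ∩ interior A) :=
          isOpen_interior.inter_closure
      _ ⊆ closure (closure (interior A ∩ interior B)) := by
          apply closure_mono
          calc interior (closure (interior B)) ∩ interior A
              ⊆ interior A ∩ closure (interior B) := by
                refine Set.subset_inter (Set.inter_subset_right) ?_
                exact Set.inter_subset_left.trans interior_subset
            _ ⊆ closure (interior A ∩ interior B) := isOpen_interior.inter_closure
      _ = closure (interior A ∩ interior B) := closure_closure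
      _ = closure (interior (A ∩ B)) := by rw [interior_inter]
  exact fun x hx => key ⟨hA hx.1, hB hx.2⟩

/-- The α-topology. -/
def alphaTop (X : Type*) [TopologicalSpace X] : TopologicalSpace X where
  IsOpen := AlphaOpen
  isOpen_univ := by
    simp [AlphaOpen]
  isOpen_inter := fun A B hA hB => alphaOpen_inter hA hB
  isOpen_sUnion := fun S hS x hx => by
    obtain ⟨A, hAS, hxA⟩ := hx
    exact interior_mono (closure_mono (interior_mono (Set.subset_sUnion_of_mem hAS)))
      (hS A hAS hxA)

theorem alphaHurewicz_iff_stronglyAlphaOpen_bijection (X : Type u) [TopologicalSpace X] :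
    AlphaHurewicz X ↔
      ∃ (Y : Type u) (_ : TopologicalSpace Y) (f : X → Y),
        Function.Bijective f ∧ (∀ A : Set X, AlphaOpen A → IsOpen (f '' A)) ∧
        Hurewicz Y := by
  constructor
  · intro h
    refine ⟨X, alphaTop X, id, Function.bijective_id, ?_, ?_⟩
    · intro A hA
      show AlphaOpen (id '' A)
      simpa using hA
    · intro 𝒜 h𝒜
      exact h 𝒜 h𝒜
  · rintro ⟨Y, τY, f, hbij, hopen, hY⟩
    intro 𝒜 h𝒜
    set 𝒜' : ℕ → Set (Set Y) := fun k => (Set.image f) '' (𝒜 k) with h𝒜'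
    have hcov : ∀ k, (∀ U ∈ 𝒜' k, IsOpen U) ∧ ⋃₀ 𝒜' k = Set.univ := by
      intro k
      constructor
      · rintro V ⟨U, hU, rfl⟩
        exact hopen U ((h𝒜 k).1 U hU)
      · ext y
        simp only [Set.mem_univ, iff_true]
        obtain ⟨x, rfl⟩ := hbij.2 y
        have : x ∈ ⋃₀ 𝒜 k := (h𝒜 k).2 ▸ Set.mem_univ x
        obtain ⟨U, hU, hxU⟩ := this
        exact ⟨f '' U, ⟨U, hU, rfl⟩, ⟨x, hxU, rfl⟩⟩
    obtain ⟨ℬ', hℬ'sub, hℬ'cov⟩ := hY 𝒜' hcov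
    refine ⟨fun k => {U ∈ 𝒜 k | f '' U ∈ ℬ' k}, fun k => ⟨fun U hU => hU.1, ?_⟩, ?_⟩
    · have : Set.InjOn (Set.image f) {U ∈ 𝒜 k | f '' U ∈ ℬ' k} :=
        fun U _ V _ h => by
          have := Set.image_injective.2 hbij.1
          exact this h
      apply Set.Finite.of_finite_image _ this
      exact ((hℬ'sub k).2).subset (fun V hV => by
        obtain ⟨U, hU, rfl⟩ := hV; exact hU.2)
    · intro x
      filter_upwards [hℬ'cov (f x)] with k hk
      obtain ⟨V, hVB, hfxV⟩ := hk
      obtain ⟨U, hU𝒜, rfl⟩ := (hℬ'sub k).1 hVB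
      obtain ⟨y, hyU, hyx⟩ := hfxV
      have : y = x := hbij.1 hyx
      exact ⟨U, ⟨hU𝒜, hVB⟩, this ▸ hyU⟩
end

section
/- Every mildly Hurewicz subspace X of the Baire space ω^ω is bounded with respect to eventual domination ≤*; i.e., there exists f ∈ ω^ω with g(n) ≤ f(n) for all but finitely many n, for every g ∈ X. In particular, no dominating subset of ω^ω is mildly Hurewicz. -/
open Filter Topology Set

theorem mildlyHurewicz_subset_baire_bounded (X : Set (ℕ → ℕ))
    (h : MildlyHurewicz X) :
    (∃ f : ℕ → ℕ, ∀ g ∈ X, ∀ᶠ n in Filter.atTop, g n ≤ f n) ∧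
    ¬ (∀ f : ℕ → ℕ, ∃ g ∈ X, ∀ᶠ n in Filter.atTop, f n ≤ g n) := by
  classical
  have main : ∃ f : ℕ → ℕ, ∀ g ∈ X, ∀ᶠ n in Filter.atTop, g n ≤ f n := by
    set V : ℕ → ℕ → Set X := fun k m => {g : X | (g : ℕ → ℕ) k ≤ m} with hV
    obtain ⟨ℬ, hℬ, hcov⟩ := h (fun k => {U | ∃ m, U = V k m}) (by
      intro k
      constructor
      · rintro U ⟨m, rfl⟩
        have : V k m = (fun g : X => (g : ℕ → ℕ) k) ⁻¹' (Set.Iic m) := rfl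
        rw [this]
        exact (isClopen_discrete (Set.Iic m)).preimage
          ((continuous_apply k).comp continuous_subtype_val)
      · ext x
        simp only [Set.mem_sUnion, Set.mem_univ, iff_true]
        exact ⟨V k ((x : ℕ → ℕ) k), ⟨(x : ℕ → ℕ) k, rfl⟩, by simp [V]⟩)
    -- pick witnesses
    have hN : ∀ k, ∃ N : ℕ, ∀ B ∈ ℬ k, ∃ m ≤ N, B = V k m := by
      intro k
      obtain ⟨hsub, hfin⟩ := hℬ k
      set w : Set X → ℕ := fun B => if hB : ∃ m, B = V k m then hB.choose else 0 with hw
      have himg : (w '' ℬ k).Finite := hfin.image w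
      obtain ⟨N, hNb⟩ := himg.bddAbove
      refine ⟨N, fun B hB => ?_⟩
      have hex : ∃ m, B = V k m := hsub hB
      refine ⟨w B, hNb ⟨B, hB, rfl⟩, ?_⟩
      simp only [hw, dif_pos hex]
      exact hex.choose_spec
    choose f hf using hN
    refine ⟨f, fun g hg => ?_⟩
    filter_upwards [hcov ⟨g, hg⟩] with k hk
    obtain ⟨B, hB, hgB⟩ := hk
    obtain ⟨m, hm, rfl⟩ := hf k B hB
    exact le_trans hgB hm
  refine ⟨main, fun H => ?_⟩
  obtain ⟨f, hf⟩ := main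
  obtain ⟨g, hgX, hg⟩ := H (fun n => f n + 1)
  obtain ⟨n, hn1, hn2⟩ := (hg.and (hf g hgX)).exists
  omega
end

section
/- If X is a θ-Lindelöf space of cardinality strictly less than the bounding number 𝔟, then X is θ-Hurewicz. -/
open Filter Topology Set

/-- The bounding number 𝔟: least cardinality of a ≤*-unbounded family in ℕ → ℕ. -/
noncomputable def boundingNumber : Cardinal :=
  sInf {c : Cardinal |
    ∃ H : Set (ℕ → ℕ),
      (¬ ∃ g : ℕ → ℕ, ∀ f ∈ H, ∀ᶠ n in Filter.atTop, f n ≤ g n) ∧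
      Cardinal.mk H = c}

def ThetaLindelof (X : Type*) [TopologicalSpace X] : Prop :=
  ∀ 𝒜 : Set (Set X), (∀ U ∈ 𝒜, ThetaOpen U) → ⋃₀ 𝒜 = Set.univ →
    ∃ 𝒞 ⊆ 𝒜, 𝒞.Countable ∧ ⋃₀ 𝒞 = Set.univ

theorem thetaLindelof_small_thetaHurewicz (X : Type u) [TopologicalSpace X]
    (hL : ThetaLindelof X) (hcard : Cardinal.mk X < Cardinal.lift.{u} boundingNumber) :
    ThetaHurewicz X := by
  classical
  intro 𝒜 h𝒜
  by_cases hX : Nonempty X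
  · have hC : ∀ k, ∃ U : ℕ → Set X, range U ⊆ 𝒜 k ∧ ⋃₀ range U = univ := by
      intro k
      obtain ⟨𝒞, h𝒞A, h𝒞c, h𝒞u⟩ := hL (𝒜 k) (h𝒜 k).1 (h𝒜 k).2
      have hne : 𝒞.Nonempty := by
        rcases Set.eq_empty_or_nonempty 𝒞 with h | h
        · subst h; simp at h𝒞u
          exact absurd h𝒞u.symm (Set.nonempty_iff_ne_empty.mp (Set.univ_nonempty))
        · exact h
      obtain ⟨U, hU⟩ := Set.Countable.exists_eq_range h𝒞c hne
      exact ⟨U, by rw [← hU]; exact h𝒞A, by rw [← hU]; exact h𝒞u⟩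
    choose U hU1 hU2 using hC
    have hmem : ∀ (x : X) (k : ℕ), ∃ n, x ∈ U k n := by
      intro x k
      have : x ∈ ⋃₀ range (U k) := by rw [hU2 k]; trivial
      obtain ⟨s, ⟨n, rfl⟩, hx⟩ := this
      exact ⟨n, hx⟩
    set F : X → ℕ → ℕ := fun x k => Nat.find (hmem x k) with hF
    have hbdd : ∃ g : ℕ → ℕ, ∀ f ∈ range F, ∀ᶠ n in Filter.atTop, f n ≤ g n := by
      by_contra h
      have h1 : boundingNumber ≤ Cardinal.mk (range F) :=
        csInf_le' ⟨range F, h, rfl⟩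
      have h2 : Cardinal.lift.{u} (Cardinal.mk (range F)) ≤ Cardinal.mk X := by
        have := Cardinal.mk_range_le_lift (f := F)
        rwa [Cardinal.lift_uzero] at this
      exact absurd (lt_of_le_of_lt h2 hcard)
        (not_lt.2 (Cardinal.lift_le.2 h1))
    obtain ⟨g, hg⟩ := hbdd
    refine ⟨fun k => U k '' Set.Iic (g k), fun k => ⟨?_, (Set.finite_Iic _).image _⟩, ?_⟩
    · exact (Set.image_subset_range _ _).trans (hU1 k)
    · intro x
      have := hg (F x) ⟨x, rfl⟩
      filter_upwards [this] with k hk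
      exact ⟨U k (F x k), ⟨F x k, hk, rfl⟩, Nat.find_spec (hmem x k)⟩
  · refine ⟨fun _ => ∅, fun k => ⟨Set.empty_subset _, Set.finite_empty⟩, ?_⟩
    intro x; exact absurd ⟨x⟩ hX
end

section
/- If X is a mildly Lindelöf space of cardinality strictly less than the bounding number 𝔟, then X is mildly Hurewicz. -/
open Filter Topology Set

def MildlyLindelof (X : Type*) [TopologicalSpace X] : Prop :=
  ∀ 𝒜 : Set (Set X), (∀ U ∈ 𝒜, IsClopen U) → ⋃₀ 𝒜 = Set.univ →
    ∃ 𝒞 ⊆ 𝒜, 𝒞.Countable ∧ ⋃₀ 𝒞 = Set.univ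

theorem mildlyLindelof_small_mildlyHurewicz (X : Type u) [TopologicalSpace X]
    (hL : MildlyLindelof X) (hcard : Cardinal.mk X < Cardinal.lift.{u} boundingNumber) :
    MildlyHurewicz X := by
  classical
  intro 𝒜 h𝒜
  by_cases hX : Nonempty X
  swap
  · exact ⟨fun _ => ∅, fun k => ⟨empty_subset _, finite_empty⟩,
      fun x => absurd ⟨x⟩ hX⟩
  choose 𝒞 h𝒞sub h𝒞count h𝒞cov using fun k => hL (𝒜 k) (h𝒜 k).1 (h𝒜 k).2
  have hne : ∀ k, (𝒞 k).Nonempty := by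
    intro k
    rcases hX with ⟨x⟩
    have hx : x ∈ ⋃₀ 𝒞 k := by rw [h𝒞cov k]; trivial
    rcases hx with ⟨V, hV, _⟩
    exact ⟨V, hV⟩
  choose U hU using fun k => (h𝒞count k).exists_eq_range (hne k)
  have hmem : ∀ (x : X) (k : ℕ), ∃ n, x ∈ U k n := by
    intro x k
    have hx : x ∈ ⋃₀ 𝒞 k := by rw [h𝒞cov k]; trivial
    rcases hx with ⟨V, hV, hxV⟩
    rw [hU k] at hV
    rcases hV with ⟨n, rfl⟩
    exact ⟨n, hxV⟩
  set f : X → ℕ → ℕ := fun x k => Nat.find (hmem x k) with hf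
  have hbdd : ∃ g : ℕ → ℕ, ∀ x : X, ∀ᶠ k in Filter.atTop, f x k ≤ g k := by
    by_contra h
    have hub : ¬ ∃ g : ℕ → ℕ, ∀ φ ∈ Set.range f, ∀ᶠ n in Filter.atTop, φ n ≤ g n := by
      rintro ⟨g, hg⟩
      exact h ⟨g, fun x => hg (f x) ⟨x, rfl⟩⟩
    have h1 : boundingNumber ≤ Cardinal.mk (Set.range f) :=
      csInf_le' ⟨Set.range f, hub, rfl⟩
    have h2 : Cardinal.lift.{u} boundingNumber ≤ Cardinal.mk X := by
      calc Cardinal.lift.{u} boundingNumber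
          ≤ Cardinal.lift.{u} (Cardinal.mk (Set.range f)) := Cardinal.lift_le.2 h1
        _ ≤ Cardinal.lift.{0} (Cardinal.mk X) := Cardinal.mk_range_le_lift
        _ = Cardinal.mk X := Cardinal.lift_id' _
    exact absurd hcard (not_lt.2 h2)
  obtain ⟨g, hg⟩ := hbdd
  refine ⟨fun k => (U k) '' {n | n ≤ g k}, fun k => ⟨?_, ?_⟩, ?_⟩
  · rintro V ⟨n, -, rfl⟩
    exact h𝒞sub k (by rw [hU k]; exact ⟨n, rfl⟩)
  · exact (Set.finite_le_nat (g k)).image _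
  · intro x
    filter_upwards [hg x] with k hk
    exact ⟨U k (f x k), ⟨f x k, hk, rfl⟩, Nat.find_spec (hmem x k)⟩
end
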